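/- Suppose a Latin square L of order n = 4m+2 has a maximal partial transversal T of length 2m+1. Then L decomposes into four blocks A, B, C, D of order 2m+1 (with A the submatrix on rows and columns avoided by T), each of which is a subsquare of L, where A and D are on a common symbol set S₁ and B and C on the complementary symbol set S₂. -/
import Mathlib


/-- A Latin square of order `n` as a set of triples `(r,c,s)`:
any two coordinates determine the third uniquely. -/
def IsLatinSquare {n : ℕ} (L : Finset (Fin n × Fin n × Fin n)) : Prop :=
  (∀ r c : Fin n, ∃! s : Fin n, (r, c, s) ∈ L) ∧
  (∀ r s : Fin n, ∃! c : Fin n, (r, c, s) ∈ L) ∧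
  (∀ c s : Fin n, ∃! r : Fin n, (r, c, s) ∈ L)

/-- A partial transversal: a subset of the triples with pairwise distinct
rows, columns and symbols. -/
def IsPartialTransversal {α β γ : Type*} (L T : Finset (α × β × γ)) : Prop :=
  T ⊆ L ∧ ∀ t ∈ T, ∀ t' ∈ T, t ≠ t' →
    t.1 ≠ t'.1 ∧ t.2.1 ≠ t'.2.1 ∧ t.2.2 ≠ t'.2.2

/-- A maximal partial transversal: one not properly contained in any
larger partial transversal. -/
def IsMaximalPartialTransversal {α β γ : Type*} (L T : Finset (α × β × γ)) : Prop :=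
  IsPartialTransversal L T ∧
    ∀ T' : Finset (α × β × γ), IsPartialTransversal L T' → T ⊆ T' → T' = T

/-- `L` restricted to rows `R`, columns `C` is a subsquare on symbol set `S`:
every cell of the submatrix has its symbol in `S`, and every
(row, symbol) and (column, symbol) pair from the index sets occurs. -/
def IsSubsquareOn {n : ℕ} (L : Finset (Fin n × Fin n × Fin n))
    (R C S : Finset (Fin n)) : Prop :=
  (∀ r ∈ R, ∀ c ∈ C, ∃ s ∈ S, (r, c, s) ∈ L) ∧
  (∀ r ∈ R, ∀ s ∈ S, ∃ c ∈ C, (r, c, s) ∈ L) ∧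
  (∀ c ∈ C, ∀ s ∈ S, ∃ r ∈ R, (r, c, s) ∈ L)

private lemma surj_aux {α β : Type*} [DecidableEq β] {X : Finset α} {Y : Finset β}
    (f : α → β) (hmaps : ∀ x ∈ X, f x ∈ Y)
    (hinj : ∀ x ∈ X, ∀ x' ∈ X, f x = f x' → x = x')
    (hcard : Y.card ≤ X.card) : ∀ y ∈ Y, ∃ x ∈ X, f x = y := by
  have himg : X.image f = Y := by
    apply Finset.eq_of_subset_of_card_le
    · intro y hy
      obtain ⟨x, hx, rfl⟩ := Finset.mem_image.1 hy
      exact hmaps x hx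
    · rwa [Finset.card_image_of_injOn (fun a ha b hb h => hinj a ha b hb h)]
  intro y hy
  rw [← himg] at hy
  obtain ⟨x, hx, hfx⟩ := Finset.mem_image.1 hy
  exact ⟨x, hx, hfx⟩

theorem stmt18 (m : ℕ)
    (L T : Finset (Fin (4*m+2) × Fin (4*m+2) × Fin (4*m+2)))
    (hL : IsLatinSquare L) (hT : IsMaximalPartialTransversal L T)
    (hlen : T.card = 2*m+1) :
    ∃ S₁ : Finset (Fin (4*m+2)), S₁.card = 2*m+1 ∧
      -- unmet rows/columns versus met rows/columns
      (let UR := Finset.univ.filter (fun r => ∀ t ∈ T, t.1 ≠ r);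
       let MR := Finset.univ.filter (fun r => ∃ t ∈ T, t.1 = r);
       let UC := Finset.univ.filter (fun c => ∀ t ∈ T, t.2.1 ≠ c);
       let MC := Finset.univ.filter (fun c => ∃ t ∈ T, t.2.1 = c);
       IsSubsquareOn L UR UC S₁ ∧      -- block A
       IsSubsquareOn L UR MC S₁ᶜ ∧     -- block B
       IsSubsquareOn L MR UC S₁ᶜ ∧     -- block C
       IsSubsquareOn L MR MC S₁) := by
  classical
  obtain ⟨hL1, hL2, hL3⟩ := hL
  obtain ⟨⟨hTL, hTd⟩, hTmax⟩ := hT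
  set S₁ : Finset (Fin (4*m+2)) := T.image (fun t => t.2.2) with hS₁def
  set UR := Finset.univ.filter (fun r : Fin (4*m+2) => ∀ t ∈ T, t.1 ≠ r) with hURdef
  set MR := Finset.univ.filter (fun r : Fin (4*m+2) => ∃ t ∈ T, t.1 = r) with hMRdef
  set UC := Finset.univ.filter (fun c : Fin (4*m+2) => ∀ t ∈ T, t.2.1 ≠ c) with hUCdef
  set MC := Finset.univ.filter (fun c : Fin (4*m+2) => ∃ t ∈ T, t.2.1 = c) with hMCdef
  -- membership characterizations
  have hURm : ∀ r, r ∈ UR ↔ ∀ t ∈ T, t.1 ≠ r := by intro r; simp [hURdef]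
  have hMRm : ∀ r, r ∈ MR ↔ ∃ t ∈ T, t.1 = r := by intro r; simp [hMRdef]
  have hUCm : ∀ c, c ∈ UC ↔ ∀ t ∈ T, t.2.1 ≠ c := by intro c; simp [hUCdef]
  have hMCm : ∀ c, c ∈ MC ↔ ∃ t ∈ T, t.2.1 = c := by intro c; simp [hMCdef]
  have hSm : ∀ s, s ∈ S₁ ↔ ∃ t ∈ T, t.2.2 = s := by intro s; simp [hS₁def]
  have hRdich : ∀ r, r ∈ UR ↔ r ∉ MR := by
    intro r; rw [hURm, hMRm]; push_neg; rfl
  have hCdich : ∀ c, c ∈ UC ↔ c ∉ MC := by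
    intro c; rw [hUCm, hMCm]; push_neg; rfl
  -- injectivity of the projections on T
  have hinj1 : ∀ t ∈ T, ∀ t' ∈ T, t.1 = t'.1 → t = t' := by
    intro t ht t' ht' h
    by_contra hne
    exact (hTd t ht t' ht' hne).1 h
  have hinj2 : ∀ t ∈ T, ∀ t' ∈ T, t.2.1 = t'.2.1 → t = t' := by
    intro t ht t' ht' h
    by_contra hne
    exact (hTd t ht t' ht' hne).2.1 h
  have hinj3 : ∀ t ∈ T, ∀ t' ∈ T, t.2.2 = t'.2.2 → t = t' := by
    intro t ht t' ht' h
    by_contra hne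
    exact (hTd t ht t' ht' hne).2.2 h
  -- cardinalities
  have hScard : S₁.card = 2*m+1 := by
    rw [hS₁def, Finset.card_image_of_injOn (fun a ha b hb h => hinj3 a ha b hb h), hlen]
  have hSccard : S₁ᶜ.card = 2*m+1 := by
    rw [Finset.card_compl, hScard, Fintype.card_fin]; omega
  have hMRcard : MR.card = 2*m+1 := by
    have h : MR = T.image (fun t => t.1) := by
      ext r; rw [hMRm]; simp
    rw [h, Finset.card_image_of_injOn (fun a ha b hb h => hinj1 a ha b hb h), hlen]
  have hMCcard : MC.card = 2*m+1 := by
    have h : MC = T.image (fun t => t.2.1) := by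
      ext c; rw [hMCm]; simp
    rw [h, Finset.card_image_of_injOn (fun a ha b hb h => hinj2 a ha b hb h), hlen]
  have hURcard : UR.card = 2*m+1 := by
    have h : UR = MRᶜ := by
      ext r; rw [Finset.mem_compl, hRdich]
    rw [h, Finset.card_compl, hMRcard, Fintype.card_fin]; omega
  have hUCcard : UC.card = 2*m+1 := by
    have h : UC = MCᶜ := by
      ext c; rw [Finset.mem_compl, hCdich]
    rw [h, Finset.card_compl, hMCcard, Fintype.card_fin]; omega
  -- uniqueness helpers
  have uS : ∀ {r c s s' : Fin (4*m+2)}, (r,c,s) ∈ L → (r,c,s') ∈ L → s = s' := by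
    intro r c s s' h h'
    obtain ⟨x, _, hx⟩ := hL1 r c
    rw [hx s h, hx s' h']
  have uC : ∀ {r c c' s : Fin (4*m+2)}, (r,c,s) ∈ L → (r,c',s) ∈ L → c = c' := by
    intro r c c' s h h'
    obtain ⟨x, _, hx⟩ := hL2 r s
    rw [hx c h, hx c' h']
  have uR : ∀ {r r' c s : Fin (4*m+2)}, (r,c,s) ∈ L → (r',c,s) ∈ L → r = r' := by
    intro r r' c s h h'
    obtain ⟨x, _, hx⟩ := hL3 c s
    rw [hx r h, hx r' h']
  -- the symbol function
  have hfL : ∀ r c : Fin (4*m+2), (r, c, (hL1 r c).choose) ∈ L :=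
    fun r c => (hL1 r c).choose_spec.1
  -- KEY: maximality forces cells of block A to use symbols of T
  have kA : ∀ r ∈ UR, ∀ c ∈ UC, ∀ s, (r,c,s) ∈ L → s ∈ S₁ := by
    intro r hr c hc s hLs
    by_contra hs
    have hsT : ∀ t ∈ T, t.2.2 ≠ s := by
      intro t ht h
      exact hs ((hSm s).2 ⟨t, ht, h⟩)
    have hrT := (hURm r).1 hr
    have hcT := (hUCm c).1 hc
    have hPT : IsPartialTransversal L (insert (r,c,s) T) := by
      constructor
      · intro t ht
        rcases Finset.mem_insert.1 ht with h | h
        · exact h ▸ hLs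
        · exact hTL h
      · intro t ht t' ht' hne
        rcases Finset.mem_insert.1 ht with h1 | h1 <;>
          rcases Finset.mem_insert.1 ht' with h2 | h2
        · exact absurd (h1.trans h2.symm) hne
        · subst h1
          exact ⟨fun h => hrT t' h2 h.symm, fun h => hcT t' h2 h.symm,
                 fun h => hsT t' h2 h.symm⟩
        · subst h2
          exact ⟨hrT t h1, hcT t h1, hsT t h1⟩
        · exact hTd t h1 t' h2 hne
    have heq := hTmax _ hPT (Finset.subset_insert _ _)
    have : (r,c,s) ∈ T := heq ▸ Finset.mem_insert_self _ _
    exact hrT _ this rfl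
  -- row surjectivity in block A
  have rowA : ∀ r ∈ UR, ∀ s ∈ S₁, ∃ c ∈ UC, (r,c,s) ∈ L := by
    intro r hr s hs
    obtain ⟨c, hc, hfc⟩ := surj_aux (fun c => (hL1 r c).choose)
      (fun c hc => kA r hr c hc _ (hfL r c))
      (by intro c _ c' _ h; simp only at h; exact uC (hfL r c) (by rw [h]; exact hfL r c'))
      (hScard.trans hUCcard.symm).le s hs
    exact ⟨c, hc, hfc ▸ hfL r c⟩
  -- column surjectivity in block A
  have colA : ∀ c ∈ UC, ∀ s ∈ S₁, ∃ r ∈ UR, (r,c,s) ∈ L := by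
    intro c hc s hs
    obtain ⟨r, hr, hfr⟩ := surj_aux (fun r => (hL1 r c).choose)
      (fun r hr => kA r hr c hc _ (hfL r c))
      (by intro r _ r' _ h; simp only at h; exact uR (hfL r c) (by rw [h]; exact hfL r' c))
      (hScard.trans hURcard.symm).le s hs
    exact ⟨r, hr, hfr ▸ hfL r c⟩
  -- block B cells avoid S₁
  have kB : ∀ r ∈ UR, ∀ c ∈ MC, ∀ s, (r,c,s) ∈ L → s ∉ S₁ := by
    intro r hr c hc s hLs hs
    obtain ⟨c', hc', hLs'⟩ := rowA r hr s hs
    exact ((hCdich c').1 hc') (uC hLs' hLs ▸ hc)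
  -- block C cells avoid S₁
  have kC : ∀ r ∈ MR, ∀ c ∈ UC, ∀ s, (r,c,s) ∈ L → s ∉ S₁ := by
    intro r hr c hc s hLs hs
    obtain ⟨r', hr', hLs'⟩ := colA c hc s hs
    exact ((hRdich r').1 hr') (uR hLs' hLs ▸ hr)
  -- row surjectivity in block C
  have rowC : ∀ r ∈ MR, ∀ s ∈ S₁ᶜ, ∃ c ∈ UC, (r,c,s) ∈ L := by
    intro r hr s hs
    obtain ⟨c, hc, hfc⟩ := surj_aux (fun c => (hL1 r c).choose)
      (fun c hc => Finset.mem_compl.2 (kC r hr c hc _ (hfL r c)))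
      (by intro c _ c' _ h; simp only at h; exact uC (hfL r c) (by rw [h]; exact hfL r c'))
      (hSccard.trans hUCcard.symm).le s hs
    exact ⟨c, hc, hfc ▸ hfL r c⟩
  -- column surjectivity in block B
  have colB : ∀ c ∈ MC, ∀ s ∈ S₁ᶜ, ∃ r ∈ UR, (r,c,s) ∈ L := by
    intro c hc s hs
    obtain ⟨r, hr, hfr⟩ := surj_aux (fun r => (hL1 r c).choose)
      (fun r hr => Finset.mem_compl.2 (kB r hr c hc _ (hfL r c)))
      (by intro r _ r' _ h; simp only at h; exact uR (hfL r c) (by rw [h]; exact hfL r' c))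
      (hSccard.trans hURcard.symm).le s hs
    exact ⟨r, hr, hfr ▸ hfL r c⟩
  -- block D cells use S₁
  have kD : ∀ r ∈ MR, ∀ c ∈ MC, ∀ s, (r,c,s) ∈ L → s ∈ S₁ := by
    intro r hr c hc s hLs
    by_contra hs
    obtain ⟨c', hc', hLs'⟩ := rowC r hr s (Finset.mem_compl.2 hs)
    exact ((hCdich c').1 hc') (uC hLs' hLs ▸ hc)
  refine ⟨S₁, hScard, ?_, ?_, ?_, ?_⟩
  -- block A
  · refine ⟨?_, rowA, colA⟩
    intro r hr c hc
    exact ⟨(hL1 r c).choose, kA r hr c hc _ (hfL r c), hfL r c⟩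
  -- block B
  · refine ⟨?_, ?_, colB⟩
    · intro r hr c hc
      exact ⟨(hL1 r c).choose, Finset.mem_compl.2 (kB r hr c hc _ (hfL r c)), hfL r c⟩
    · intro r hr s hs
      obtain ⟨c, hc, _⟩ := hL2 r s
      refine ⟨c, ?_, hc⟩
      by_contra hcm
      have hcU : c ∈ UC := (hCdich c).2 hcm
      exact Finset.mem_compl.1 hs (kA r hr c hcU s hc)
  -- block C
  · refine ⟨?_, rowC, ?_⟩
    · intro r hr c hc
      exact ⟨(hL1 r c).choose, Finset.mem_compl.2 (kC r hr c hc _ (hfL r c)), hfL r c⟩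
    · intro c hc s hs
      obtain ⟨r, hrL, _⟩ := hL3 c s
      refine ⟨r, ?_, hrL⟩
      by_contra hrm
      have hrU : r ∈ UR := by
        rw [hRdich]; exact fun h => hrm h
      exact Finset.mem_compl.1 hs (kA r hrU c hc s hrL)
  -- block D
  · refine ⟨?_, ?_, ?_⟩
    · intro r hr c hc
      exact ⟨(hL1 r c).choose, kD r hr c hc _ (hfL r c), hfL r c⟩
    · intro r hr s hs
      obtain ⟨c, hcL, _⟩ := hL2 r s
      refine ⟨c, ?_, hcL⟩
      by_contra hcm
      have hcU : c ∈ UC := (hCdich c).2 hcm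
      exact kC r hr c hcU s hcL hs
    · intro c hc s hs
      obtain ⟨r, hrL, _⟩ := hL3 c s
      refine ⟨r, ?_, hrL⟩
      by_contra hrm
      have hrU : r ∈ UR := (hRdich r).2 hrm
      exact kB r hrU c hc s hrL hs
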